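/- If G is a finite simple bipartite graph, then 2·b₂(G) = r₂(G). Furthermore, if V(G) = A ∪ B is a bipartition of G (A and B disjoint and every edge of G has one endpoint in A and one in B), then there exists an odd cover of G of cardinality b₂(G) = r₂(G)/2 that respects the bipartition: every biclique (X,Y) in the cover satisfies X ⊆ A and Y ⊆ B, or X ⊆ B and Y ⊆ A. -/

import Mathlib

open scoped Classical

/-- A list of bicliques `B 0, …, B (k-1)` (each given by a pair of disjoint
vertex subsets) is an *odd cover* of `G` if two distinct vertices are adjacent
in `G` exactly when they lie in opposite parts of an odd number of the bicliques. -/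
def IsOddCover {V : Type*} [Fintype V] (G : SimpleGraph V) {k : ℕ}
    (B : Fin k → Finset V × Finset V) : Prop :=
  (∀ i, Disjoint (B i).1 (B i).2) ∧
  ∀ u v : V, u ≠ v →
    (G.Adj u v ↔ Odd (Finset.univ.filter (fun i : Fin k =>
      (u ∈ (B i).1 ∧ v ∈ (B i).2) ∨ (u ∈ (B i).2 ∧ v ∈ (B i).1))).card)

/-- `b2 G` is the minimum cardinality of an odd cover of `G`. -/
noncomputable def b2 {V : Type*} [Fintype V] (G : SimpleGraph V) : ℕ :=
  sInf {k : ℕ | ∃ B : Fin k → Finset V × Finset V, IsOddCover G B}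

/-- `r2 G` is the rank of the adjacency matrix of `G` over `𝔽₂`. -/
noncomputable def r2 {V : Type*} [Fintype V] (G : SimpleGraph V) : ℕ :=
  (Matrix.of fun u v : V => if G.Adj u v then (1 : ZMod 2) else 0).rank

section Aux

open Matrix Module

variable {V : Type*} [Fintype V]

lemma OC.f2_cases (x : ZMod 2) : x = 0 ∨ x = 1 := by revert x; decide

lemma OC.f2_indicator (w x y z : ZMod 2) (h : ¬(w ≠ 0 ∧ y ≠ 0)) :
    (if (w ≠ 0 ∧ x ≠ 0) ∨ (y ≠ 0 ∧ z ≠ 0) then (1 : ZMod 2) else 0) = w * x + y * z := by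
  revert w x y z
  decide

lemma OC.rank_add_le (M N : Matrix V V (ZMod 2)) : (M + N).rank ≤ M.rank + N.rank := by
  unfold Matrix.rank
  rw [Matrix.mulVecLin_add]
  have hr : LinearMap.range (M.mulVecLin + N.mulVecLin) ≤
      LinearMap.range M.mulVecLin ⊔ LinearMap.range N.mulVecLin := by
    rintro x ⟨y, rfl⟩
    exact Submodule.add_mem_sup ⟨y, rfl⟩ ⟨y, rfl⟩
  calc finrank (ZMod 2) _
      ≤ finrank (ZMod 2) ↥(LinearMap.range M.mulVecLin ⊔ LinearMap.range N.mulVecLin) :=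
        Submodule.finrank_mono hr
    _ ≤ _ := by
        have := Submodule.finrank_sup_add_finrank_inf_eq (LinearMap.range M.mulVecLin)
          (LinearMap.range N.mulVecLin)
        omega

lemma OC.rank_sum_le {ι : Type*} (s : Finset ι) (M : ι → Matrix V V (ZMod 2)) :
    (∑ i ∈ s, M i).rank ≤ ∑ i ∈ s, (M i).rank := by
  induction s using Finset.cons_induction with
  | empty => simp [Matrix.rank_zero]
  | cons a s ha ih =>
      rw [Finset.sum_cons, Finset.sum_cons]
      exact le_trans (OC.rank_add_le _ _) (by omega)

lemma OC.rank_vecMulVec_le (a b : V → ZMod 2) : (Matrix.vecMulVec a b).rank ≤ 1 := by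
  rw [Matrix.vecMulVec_eq Unit]
  exact le_trans (Matrix.rank_mul_le_left _ _) (le_trans (Matrix.rank_le_card_width _) (by simp))

lemma OC.rank_zero_eq (M : Matrix V V (ZMod 2)) (h : M.rank = 0) : M = 0 := by
  rw [Matrix.rank_eq_finrank_span_cols] at h
  have hbot : Submodule.span (ZMod 2) (Set.range Mᵀ) = ⊥ := Submodule.finrank_eq_zero.mp h
  ext u v
  have hm : Mᵀ v ∈ Submodule.span (ZMod 2) (Set.range Mᵀ) := Submodule.subset_span ⟨v, rfl⟩
  rw [hbot, Submodule.mem_bot] at hm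
  simpa using congrFun hm u

/-- Rank-one decomposition with support control. -/
lemma OC.decomp (S T : Set V) : ∀ (k : ℕ) (M : Matrix V V (ZMod 2)), M.rank ≤ k →
    (∀ u v, M u v ≠ 0 → u ∈ S ∧ v ∈ T) →
    ∃ a b : Fin k → (V → ZMod 2), M = ∑ i, Matrix.vecMulVec (a i) (b i) ∧
      (∀ i u, a i u ≠ 0 → u ∈ S) ∧ (∀ i v, b i v ≠ 0 → v ∈ T) := by
  intro k
  induction k with
  | zero =>
      intro M hrank _
      refine ⟨Fin.elim0, Fin.elim0, ?_, by simp, by simp⟩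
      simpa using OC.rank_zero_eq M (Nat.le_zero.mp hrank)
  | succ k ih =>
      intro M hrank hsupp
      by_cases hM : M = 0
      · refine ⟨0, 0, ?_, by simp, by simp⟩
        ext u v
        simp [hM, Matrix.vecMulVec]
      · obtain ⟨i, j, hij⟩ : ∃ i j, M i j ≠ 0 := by
          by_contra h
          push_neg at h
          exact hM (by ext u v; simpa using h u v)
        have hij1 : M i j = 1 := (OC.f2_cases (M i j)).resolve_left hij
        set a0 : V → ZMod 2 := fun u => M u j with ha0
        set b0 : V → ZMod 2 := fun v => M i v with hb0
        set M' : Matrix V V (ZMod 2) := M - Matrix.vecMulVec a0 b0 with hM'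
        have hrow : ∀ v, M' i v = 0 := by
          intro v
          simp [hM', Matrix.vecMulVec, ha0, hb0, hij1]
        have hsupp' : ∀ u v, M' u v ≠ 0 → u ∈ S ∧ v ∈ T := by
          intro u v h
          by_cases h1 : M u v ≠ 0
          · exact hsupp u v h1
          · push_neg at h1
            have h2 : M u j * M i v ≠ 0 := by
              intro hz
              apply h
              simp [hM', Matrix.vecMulVec, ha0, hb0, h1, hz]
            exact ⟨(hsupp u j (left_ne_zero_of_mul h2)).1,
              (hsupp i v (right_ne_zero_of_mul h2)).2⟩
        have hcols : ∀ v, M'ᵀ v = Mᵀ v - (b0 v) • Mᵀ j := by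
          intro v
          funext u
          simp [hM', Matrix.vecMulVec, ha0, hb0, Matrix.transpose_apply, mul_comm]
        have hCD : Submodule.span (ZMod 2) (Set.range M'ᵀ) ≤
            Submodule.span (ZMod 2) (Set.range Mᵀ) := by
          rw [Submodule.span_le]
          rintro x ⟨v, rfl⟩
          rw [hcols v]
          exact sub_mem (Submodule.subset_span ⟨v, rfl⟩)
            (Submodule.smul_mem _ _ (Submodule.subset_span ⟨j, rfl⟩))
        have ha0D : Mᵀ j ∈ Submodule.span (ZMod 2) (Set.range Mᵀ) :=
          Submodule.subset_span ⟨j, rfl⟩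
        have ha0notC : Mᵀ j ∉ Submodule.span (ZMod 2) (Set.range M'ᵀ) := by
          intro hmem
          have hker : Submodule.span (ZMod 2) (Set.range M'ᵀ) ≤
              LinearMap.ker (LinearMap.proj (R := ZMod 2) (φ := fun _ : V => ZMod 2) i) := by
            rw [Submodule.span_le]
            rintro x ⟨v, rfl⟩
            simp [LinearMap.mem_ker, Matrix.transpose_apply, hrow v]
          have := hker hmem
          simp [LinearMap.mem_ker, Matrix.transpose_apply, hij1] at this
        have hlt : Submodule.span (ZMod 2) (Set.range M'ᵀ) <
            Submodule.span (ZMod 2) (Set.range M'ᵀ) ⊔ Submodule.span (ZMod 2) {Mᵀ j} := by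
          refine lt_of_le_of_ne le_sup_left (fun h => ha0notC ?_)
          rw [h]
          exact Submodule.mem_sup_right (Submodule.mem_span_singleton_self _)
        have hsupD : Submodule.span (ZMod 2) (Set.range M'ᵀ) ⊔ Submodule.span (ZMod 2) {Mᵀ j} ≤
            Submodule.span (ZMod 2) (Set.range Mᵀ) :=
          sup_le hCD ((Submodule.span_singleton_le_iff_mem _ _).mpr ha0D)
        have hrank' : M'.rank ≤ k := by
          have e : ∀ X : Matrix V V (ZMod 2), X.col = Xᵀ := fun _ => rfl
          rw [Matrix.rank_eq_finrank_span_cols, e] at hrank ⊢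
          have h1 := Submodule.finrank_lt_finrank_of_lt hlt
          have h2 := Submodule.finrank_mono hsupD
          omega
        obtain ⟨a, b, hsum, haS, hbT⟩ := ih M' hrank' hsupp'
        refine ⟨Fin.cons a0 a, Fin.cons b0 b, ?_, ?_, ?_⟩
        · rw [Fin.sum_univ_succ]
          simp only [Fin.cons_zero, Fin.cons_succ]
          rw [← hsum, hM']
          abel
        · intro idx u h
          refine idx.cases (fun h => ?_) (fun i' h => haS i' u h) h
          exact (hsupp u j (by simpa [ha0] using h)).1
        · intro idx v h
          refine idx.cases (fun h => ?_) (fun i' h => hbT i' v h) h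
          exact (hsupp i v (by simpa [hb0] using h)).2

/-- Any odd cover of size `k` gives `r2 G ≤ 2k`. -/
lemma OC.cover_rank_le (G : SimpleGraph V) {k : ℕ} (Bs : Fin k → Finset V × Finset V)
    (h : IsOddCover G Bs) :
    (Matrix.of fun u v : V => if G.Adj u v then (1 : ZMod 2) else 0).rank ≤ 2 * k := by
  obtain ⟨hd, hadj⟩ := h
  set x : Fin k → V → ZMod 2 := fun i u => if u ∈ (Bs i).1 then 1 else 0 with hx
  set y : Fin k → V → ZMod 2 := fun i u => if u ∈ (Bs i).2 then 1 else 0 with hy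
  have key : (Matrix.of fun u v : V => if G.Adj u v then (1 : ZMod 2) else 0) =
      ∑ i, (Matrix.vecMulVec (x i) (y i) + Matrix.vecMulVec (y i) (x i)) := by
    ext u v
    by_cases huv : u = v
    · subst huv
      simp only [Matrix.of_apply, G.irrefl, if_false, Matrix.sum_apply, Matrix.add_apply,
        Matrix.vecMulVec_apply]
      rw [eq_comm]
      apply Finset.sum_eq_zero
      intro i _
      rw [mul_comm (y i u) (x i u)]
      exact CharTwo.add_self_eq_zero _
    · have hterm : ∀ i : Fin k, x i u * y i v + y i u * x i v
          = if (u ∈ (Bs i).1 ∧ v ∈ (Bs i).2) ∨ (u ∈ (Bs i).2 ∧ v ∈ (Bs i).1)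
            then (1 : ZMod 2) else 0 := by
        intro i
        by_cases h1 : u ∈ (Bs i).1 <;> by_cases h2 : v ∈ (Bs i).2 <;>
          by_cases h3 : u ∈ (Bs i).2 <;> by_cases h4 : v ∈ (Bs i).1 <;>
          first
          | exact absurd h3 (Finset.disjoint_left.mp (hd i) h1)
          | exact absurd h2 (Finset.disjoint_right.mp (hd i) h4)
          | simp [hx, hy, h1, h2, h3, h4]
      simp only [Matrix.of_apply, Matrix.sum_apply, Matrix.add_apply, Matrix.vecMulVec_apply]
      rw [Finset.sum_congr rfl (fun i _ => hterm i), Finset.sum_boole]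
      by_cases hA : G.Adj u v
      · rw [if_pos hA, eq_comm]
        exact ZMod.natCast_eq_one_iff_odd.mpr ((hadj u v huv).mp hA)
      · rw [if_neg hA, eq_comm]
        have hodd : ¬ Odd (Finset.univ.filter (fun i : Fin k =>
            (u ∈ (Bs i).1 ∧ v ∈ (Bs i).2) ∨ (u ∈ (Bs i).2 ∧ v ∈ (Bs i).1))).card := by
          intro ho
          exact hA ((hadj u v huv).mpr ho)
        rcases OC.f2_cases ((Finset.univ.filter (fun i : Fin k =>
            (u ∈ (Bs i).1 ∧ v ∈ (Bs i).2) ∨ (u ∈ (Bs i).2 ∧ v ∈ (Bs i).1))).card : ZMod 2)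
            with h0 | h1
        · exact h0
        · exact absurd (ZMod.natCast_eq_one_iff_odd.mp h1) hodd
  rw [key]
  calc (∑ i, (Matrix.vecMulVec (x i) (y i) + Matrix.vecMulVec (y i) (x i))).rank
      ≤ ∑ i : Fin k, (Matrix.vecMulVec (x i) (y i) + Matrix.vecMulVec (y i) (x i)).rank :=
        OC.rank_sum_le _ _
    _ ≤ ∑ _i : Fin k, 2 := Finset.sum_le_sum (fun i _ =>
        le_trans (OC.rank_add_le _ _)
          (add_le_add (OC.rank_vecMulVec_le _ _) (OC.rank_vecMulVec_le _ _)))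
    _ = 2 * k := by simp [mul_comm]

/-- Vectors vanishing outside `S`. -/
def OC.K (S : Set V) : Submodule (ZMod 2) (V → ZMod 2) where
  carrier := {f | ∀ x ∉ S, f x = 0}
  add_mem' := by
    intro f g hf hg x hx
    simp [hf x hx, hg x hx]
  zero_mem' := by intro x _; rfl
  smul_mem' := by
    intro c f hf x hx
    simp [hf x hx]

end Aux

theorem stmt9 {V : Type*} [Fintype V] (G : SimpleGraph V) (A B : Set V)
    (hdisj : Disjoint A B) (hunion : A ∪ B = Set.univ)
    (hbip : ∀ u v : V, G.Adj u v → (u ∈ A ∧ v ∈ B) ∨ (u ∈ B ∧ v ∈ A)) :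
    2 * b2 G = r2 G ∧
    ∃ C : Fin (b2 G) → Finset V × Finset V, IsOddCover G C ∧
      ∀ i, (((C i).1 : Set V) ⊆ A ∧ ((C i).2 : Set V) ⊆ B) ∨
           (((C i).1 : Set V) ⊆ B ∧ ((C i).2 : Set V) ⊆ A) := by
  classical
  open Matrix Module in
  set N : Matrix V V (ZMod 2) :=
    Matrix.of fun u v : V => if G.Adj u v then (1 : ZMod 2) else 0 with hNdef
  set P : Matrix V V (ZMod 2) :=
    Matrix.of fun u v : V => if u ∈ A ∧ G.Adj u v then (1 : ZMod 2) else 0 with hPdef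
  have hPsupp : ∀ u v, P u v ≠ 0 → u ∈ A ∧ v ∈ B := by
    intro u v h
    rw [hPdef] at h
    simp only [Matrix.of_apply, ne_eq, ite_eq_right_iff, not_forall] at h
    obtain ⟨⟨hu, hadj⟩, -⟩ := h
    refine ⟨hu, ?_⟩
    rcases hbip u v hadj with ⟨_, hv⟩ | ⟨hu', _⟩
    · exact hv
    · exact absurd hu' (Set.disjoint_left.mp hdisj hu)
  -- the decomposition of P
  set r := P.rank with hr
  obtain ⟨a, b, hPsum, haA, hbB⟩ := OC.decomp A B r P hr.ge hPsupp
  -- the candidate cover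
  set C0 : Fin r → Finset V × Finset V := fun i =>
    (Finset.univ.filter fun u => a i u ≠ 0, Finset.univ.filter fun v => b i v ≠ 0) with hC0
  have hC0disj : ∀ i, Disjoint (C0 i).1 (C0 i).2 := by
    intro i
    rw [Finset.disjoint_left]
    intro u hu1 hu2
    rw [hC0] at hu1 hu2
    simp only [Finset.mem_filter] at hu1 hu2
    exact Set.disjoint_left.mp hdisj (haA i u hu1.2) (hbB i u hu2.2)
  have hNentry : ∀ u v, N u v = P u v + P v u := by
    intro u v
    rw [hNdef, hPdef]
    simp only [Matrix.of_apply]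
    by_cases hA : G.Adj u v
    · rcases hbip u v hA with ⟨hu, hv⟩ | ⟨hu, hv⟩
      · rw [if_pos hA, if_pos ⟨hu, hA⟩, if_neg, add_zero]
        rintro ⟨hv', -⟩
        exact (Set.disjoint_right.mp hdisj hv) hv'
      · rw [if_pos hA, if_neg, if_pos ⟨hv, G.adj_symm hA⟩, zero_add]
        rintro ⟨hu', -⟩
        exact Set.disjoint_left.mp hdisj hu' hu
    · rw [if_neg hA, if_neg (fun h => hA h.2), if_neg (fun h => hA (G.adj_symm h.2)), add_zero]
  have hcard : ∀ u v : V, ((Finset.univ.filter (fun i : Fin r =>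
      (u ∈ (C0 i).1 ∧ v ∈ (C0 i).2) ∨ (u ∈ (C0 i).2 ∧ v ∈ (C0 i).1))).card : ZMod 2)
      = N u v := by
    intro u v
    rw [← Finset.sum_boole]
    have hterm : ∀ i : Fin r,
        (if (u ∈ (C0 i).1 ∧ v ∈ (C0 i).2) ∨ (u ∈ (C0 i).2 ∧ v ∈ (C0 i).1)
          then (1 : ZMod 2) else 0) = a i u * b i v + b i u * a i v := by
      intro i
      have hcond : ((u ∈ (C0 i).1 ∧ v ∈ (C0 i).2) ∨ (u ∈ (C0 i).2 ∧ v ∈ (C0 i).1)) ↔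
          ((a i u ≠ 0 ∧ b i v ≠ 0) ∨ (b i u ≠ 0 ∧ a i v ≠ 0)) := by
        rw [hC0]
        simp [Finset.mem_filter]
      rw [if_congr hcond rfl rfl]
      refine OC.f2_indicator _ _ _ _ ?_
      rintro ⟨h1, h2⟩
      exact Set.disjoint_left.mp hdisj (haA i u h1) (hbB i u h2)
    rw [Finset.sum_congr rfl (fun i _ => hterm i), Finset.sum_add_distrib]
    have h1 : ∑ i : Fin r, a i u * b i v = P u v := by
      rw [hPsum]
      simp [Matrix.sum_apply, Matrix.vecMulVec_apply]
    have h2 : ∑ i : Fin r, b i u * a i v = P v u := by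
      rw [hPsum]
      simp [Matrix.sum_apply, Matrix.vecMulVec_apply, mul_comm]
    rw [h1, h2, hNentry u v]
  have hC0cover : IsOddCover G C0 := by
    refine ⟨hC0disj, fun u v huv => ?_⟩
    have hN1 : G.Adj u v ↔ N u v = 1 := by
      rw [hNdef]
      simp only [Matrix.of_apply]
      by_cases hA : G.Adj u v
      · simp [hA]
      · simp [hA]
    rw [hN1, ← hcard u v]
    exact ZMod.natCast_eq_one_iff_odd
  have hC0bip : ∀ i, (((C0 i).1 : Set V) ⊆ A ∧ ((C0 i).2 : Set V) ⊆ B) ∨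
      (((C0 i).1 : Set V) ⊆ B ∧ ((C0 i).2 : Set V) ⊆ A) := by
    intro i
    left
    constructor
    · intro u hu
      simp only [hC0, Finset.coe_filter, Set.mem_setOf_eq] at hu
      exact haA i u hu.2
    · intro v hv
      simp only [hC0, Finset.coe_filter, Set.mem_setOf_eq] at hv
      exact hbB i v hv.2
  have hPcol : Submodule.span (ZMod 2) (Set.range Pᵀ) ≤
      Submodule.span (ZMod 2) (Set.range Nᵀ) := by
    rw [Submodule.span_le]
    rintro x ⟨v, rfl⟩
    by_cases hv : v ∈ B
    · have hPN : Pᵀ v = Nᵀ v := by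
        funext u
        simp only [Matrix.transpose_apply, hPdef, hNdef, Matrix.of_apply]
        by_cases hA : G.Adj u v
        · have hu : u ∈ A := by
            rcases hbip u v hA with ⟨hu, _⟩ | ⟨_, hv'⟩
            · exact hu
            · exact absurd hv' (Set.disjoint_right.mp hdisj hv)
          rw [if_pos ⟨hu, hA⟩, if_pos hA]
        · rw [if_neg (fun h => hA h.2), if_neg hA]
      rw [hPN]
      exact Submodule.subset_span ⟨v, rfl⟩
    · have hP0 : Pᵀ v = 0 := by
        funext u
        by_contra h
        exact hv (hPsupp u v h).2
      rw [hP0]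
      exact Submodule.zero_mem _
  have hProw : Submodule.span (ZMod 2) (Set.range P) ≤
      Submodule.span (ZMod 2) (Set.range Nᵀ) := by
    rw [Submodule.span_le]
    rintro x ⟨u, rfl⟩
    by_cases hu : u ∈ A
    · have hPN : P u = Nᵀ u := by
        funext v
        simp only [Matrix.transpose_apply, hPdef, hNdef, Matrix.of_apply]
        by_cases hA : G.Adj u v
        · rw [if_pos ⟨hu, hA⟩, if_pos (G.adj_symm hA)]
        · rw [if_neg (fun h => hA h.2), if_neg (fun h => hA (G.adj_symm h))]
      rw [hPN]
      exact Submodule.subset_span ⟨u, rfl⟩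
    · have hP0 : P u = 0 := by
        funext v
        by_contra h
        exact hu (hPsupp u v h).1
      rw [hP0]
      exact Submodule.zero_mem _
  have hKA : Submodule.span (ZMod 2) (Set.range Pᵀ) ≤ OC.K A := by
    rw [Submodule.span_le]
    rintro x ⟨v, rfl⟩
    intro u hu
    by_contra h
    exact hu (hPsupp u v h).1
  have hKB : Submodule.span (ZMod 2) (Set.range P) ≤ OC.K B := by
    rw [Submodule.span_le]
    rintro x ⟨u, rfl⟩
    intro v hv
    by_contra h
    exact hv (hPsupp u v h).2
  have hinf : OC.K A ⊓ OC.K B = (⊥ : Submodule (ZMod 2) (V → ZMod 2)) := by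
    rw [eq_bot_iff]
    rintro f ⟨hfA, hfB⟩
    simp only [Submodule.mem_bot]
    funext x
    have hx : x ∈ A ∪ B := hunion ▸ Set.mem_univ x
    rcases hx with hx | hx
    · exact hfB x (Set.disjoint_left.mp hdisj hx)
    · exact hfA x (Set.disjoint_right.mp hdisj hx)
  have h2r : 2 * r ≤ N.rank := by
    have hPT : Pᵀ.rank = Module.finrank (ZMod 2) ↥(Submodule.span (ZMod 2) (Set.range P)) := by
      exact Matrix.rank_eq_finrank_span_cols Pᵀ
    have hPr : P.rank = Module.finrank (ZMod 2) ↥(Submodule.span (ZMod 2) (Set.range Pᵀ)) :=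
      Matrix.rank_eq_finrank_span_cols P
    have hNr : N.rank = Module.finrank (ZMod 2) ↥(Submodule.span (ZMod 2) (Set.range Nᵀ)) :=
      Matrix.rank_eq_finrank_span_cols N
    have htr : Pᵀ.rank = P.rank := Matrix.rank_transpose P
    have hsup := Submodule.finrank_sup_add_finrank_inf_eq
      (Submodule.span (ZMod 2) (Set.range Pᵀ)) (Submodule.span (ZMod 2) (Set.range P))
    have hbot : Submodule.span (ZMod 2) (Set.range Pᵀ) ⊓
        Submodule.span (ZMod 2) (Set.range P) = ⊥ := by
      rw [eq_bot_iff, ← hinf]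
      exact inf_le_inf hKA hKB
    rw [hbot, finrank_bot] at hsup
    have hm : Module.finrank (ZMod 2) ↥(Submodule.span (ZMod 2) (Set.range Pᵀ) ⊔
          Submodule.span (ZMod 2) (Set.range P)) ≤
        Module.finrank (ZMod 2) ↥(Submodule.span (ZMod 2) (Set.range Nᵀ)) :=
      Submodule.finrank_mono (sup_le hPcol hProw)
    omega
  have hub : b2 G ≤ r := Nat.sInf_le ⟨C0, hC0cover⟩
  have hlbN : N.rank ≤ 2 * r := by
    have h := OC.cover_rank_le G C0 hC0cover
    rwa [← hNdef] at h
  have hlb : r ≤ b2 G := by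
    refine le_csInf ⟨r, ⟨C0, hC0cover⟩⟩ ?_
    rintro k ⟨Bs, hBs⟩
    have hk := OC.cover_rank_le G Bs hBs
    rw [← hNdef] at hk
    omega
  have hb2 : b2 G = r := le_antisymm hub hlb
  have hr2 : r2 G = N.rank := by
    unfold r2
    rw [← hNdef]
  constructor
  · rw [hr2]
    omega
  · rw [hb2]
    exact ⟨C0, hC0cover, hC0bip⟩
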